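/- Fix integers m ≥ 2, n ≥ 1 and a real number D with 0 < D ≤ n(m−1)/m. Then the maximal leakage of the mechanism Q_D equals ε_ML(Q_D) = n · log( m(1 − D/n) ). -/

import Mathlib

open Finset Real

/-- for `0 < D ≤ n(m-1)/m`, the maximal leakage of `Q_D`,
`ε_ML(Q_D) = log Σ_y max_x Q_D(y|x)`, equals `n log(m(1 - D/n))`. -/
theorem stmt_3 (m n : ℕ) (hm : 2 ≤ m) (hn : 1 ≤ n)
    (D : ℝ) (hD0 : 0 < D) (hDn : D ≤ (n : ℝ) * ((m : ℝ) - 1) / m)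
    (QD : (Fin n → Fin m) → (Fin n → Fin m) → ℝ)
    (hQD : ∀ x y, QD x y =
      (1 - D / n) ^ n * (((m : ℝ) - 1) * ((n : ℝ) - D) / D) ^ (-(hammingDist x y : ℤ))) :
    Real.log (∑ y, ⨆ x, QD x y) = (n : ℝ) * Real.log ((m : ℝ) * (1 - D / n)) := by
  have hm0 : (0:ℝ) < m := by positivity
  have hm2 : (2:ℝ) ≤ m := by exact_mod_cast hm
  have hn0 : (0:ℝ) < n := by
    have : (1:ℝ) ≤ n := by exact_mod_cast hn
    linarith
  have hDm : D * m ≤ n * ((m:ℝ) - 1) := (le_div_iff₀ hm0).mp hDn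
  have hDltn : D < n := by nlinarith
  have hc : 0 < 1 - D / n := by
    have : D / n < 1 := (div_lt_one hn0).mpr hDltn
    linarith
  have hr1 : (1:ℝ) ≤ ((m:ℝ) - 1) * ((n:ℝ) - D) / D := by
    rw [le_div_iff₀ hD0]
    nlinarith
  have key : ∀ y : Fin n → Fin m, (⨆ x, QD x y) = (1 - D / n) ^ n := by
    intro y
    haveI : Nonempty (Fin n → Fin m) := ⟨fun _ => ⟨0, by omega⟩⟩
    apply le_antisymm
    · apply ciSup_le
      intro x
      rw [hQD]
      have h1 : (((m:ℝ) - 1) * ((n:ℝ) - D) / D) ^ (-(hammingDist x y : ℤ)) ≤ 1 :=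
        zpow_le_one_of_nonpos₀ hr1 (by simp)
      have h2 : (0:ℝ) ≤ (1 - D / n) ^ n := by positivity
      nlinarith
    · have h := le_ciSup (f := fun x => QD x y) (Set.Finite.bddAbove (Set.finite_range _)) y
      rwa [hQD y y, hammingDist_self, Nat.cast_zero, neg_zero, zpow_zero, mul_one] at h
  rw [Finset.sum_congr rfl (fun y _ => key y), Finset.sum_const, Finset.card_univ,
    Fintype.card_fun, Fintype.card_fin, Fintype.card_fin, nsmul_eq_mul]
  have : ((m ^ n : ℕ) : ℝ) * (1 - D / n) ^ n = ((m:ℝ) * (1 - D / n)) ^ n := by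
    push_cast
    rw [mul_pow]
  rw [this, Real.log_pow]
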